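/- Let a>0, b>0, c≥0, g0>0 and let f0, f1 be the MTTP vector fields on ℝ⁴. Then for every x = (x1,x2,x3,x4) ∈ ℝ⁴, the iterated Lie bracket [f0,[f0,f1]](x) equals (−a b sin x3, a b cos x3, 0, 0). -/

import Mathlib

/-- The drift vector field of the MTTP system on ℝ⁴. -/
noncomputable def mttpF0 (a c g0 : ℝ) : (Fin 4 → ℝ) → (Fin 4 → ℝ) :=
  fun x => ![a * Real.cos (x 2) - c * x 0 * x 1,
             a * Real.sin (x 2) + c * (x 0) ^ 2 - g0,
             x 3 - c * x 0,
             0]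

/-- The control vector field of the MTTP system on ℝ⁴. -/
def mttpF1 (b : ℝ) : (Fin 4 → ℝ) → (Fin 4 → ℝ) :=
  fun _ => ![0, 0, 0, b]

/-- Lie bracket of vector fields on ℝ⁴: [f,g](x) = Dg(x)·f(x) − Df(x)·g(x). -/
noncomputable def lieBracket4 (f g : (Fin 4 → ℝ) → (Fin 4 → ℝ)) :
    (Fin 4 → ℝ) → (Fin 4 → ℝ) :=
  fun x => fderiv ℝ g x (f x) - fderiv ℝ f x (g x)

/-- Explicit total derivative of `mttpF0` at `x`. -/
noncomputable def mttpD (a c : ℝ) (x : Fin 4 → ℝ) : (Fin 4 → ℝ) →L[ℝ] (Fin 4 → ℝ) :=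
  ContinuousLinearMap.pi
    ![(-(a * Real.sin (x 2))) • ContinuousLinearMap.proj 2
        - ((c * x 1) • ContinuousLinearMap.proj 0 + (c * x 0) • ContinuousLinearMap.proj 1),
      (a * Real.cos (x 2)) • ContinuousLinearMap.proj 2
        + (c * (2 * x 0)) • ContinuousLinearMap.proj 0,
      ContinuousLinearMap.proj 3 - c • ContinuousLinearMap.proj 0,
      0]

lemma hasFDerivAt_mttpF0 (a c g0 : ℝ) (x : Fin 4 → ℝ) :
    HasFDerivAt (mttpF0 a c g0) (mttpD a c x) x := by
  have hproj : ∀ i : Fin 4, HasFDerivAt (fun y : Fin 4 → ℝ => y i)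
      (ContinuousLinearMap.proj i : (Fin 4 → ℝ) →L[ℝ] ℝ) x := fun i => hasFDerivAt_apply i x
  apply hasFDerivAt_pi.2
  intro i
  fin_cases i
  · have h1 : HasFDerivAt (fun y : Fin 4 → ℝ => a * Real.cos (y 2))
        (a • ((-Real.sin (x 2)) • (ContinuousLinearMap.proj 2 : (Fin 4 → ℝ) →L[ℝ] ℝ))) x :=
      by have := (((Real.hasDerivAt_cos (x 2)).comp_hasFDerivAt x (hproj 2))).const_mul a; exact this
    have h2 : HasFDerivAt (fun y : Fin 4 → ℝ => c * y 0 * y 1)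
        ((c * x 0) • (ContinuousLinearMap.proj 1 : (Fin 4 → ℝ) →L[ℝ] ℝ)
          + (x 1) • (c • (ContinuousLinearMap.proj 0 : (Fin 4 → ℝ) →L[ℝ] ℝ))) x :=
      ((hproj 0).const_mul c).mul (hproj 1)
    refine (h1.sub h2).congr_fderiv ?_
    refine ContinuousLinearMap.ext fun v => ?_
    simp [mttpD]
    ring
  · have h1 : HasFDerivAt (fun y : Fin 4 → ℝ => a * Real.sin (y 2))
        (a • ((Real.cos (x 2)) • (ContinuousLinearMap.proj 2 : (Fin 4 → ℝ) →L[ℝ] ℝ))) x :=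
      by have := (((Real.hasDerivAt_sin (x 2)).comp_hasFDerivAt x (hproj 2))).const_mul a; exact this
    have h2 : HasFDerivAt (fun y : Fin 4 → ℝ => c * (y 0) ^ 2)
        (c • (((2 : ℕ) * x 0 ^ (2 - 1)) • (ContinuousLinearMap.proj 0 : (Fin 4 → ℝ) →L[ℝ] ℝ))) x :=
      by have := ((hasDerivAt_pow 2 (x 0)).comp_hasFDerivAt x (hproj 0)).const_mul c; exact this
    refine ((h1.add h2).sub_const g0).congr_fderiv ?_
    refine ContinuousLinearMap.ext fun v => ?_
    simp [mttpD]
    ring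
  · have h2 : HasFDerivAt (fun y : Fin 4 → ℝ => c * y 0)
        (c • (ContinuousLinearMap.proj 0 : (Fin 4 → ℝ) →L[ℝ] ℝ)) x := (hproj 0).const_mul c
    refine ((hproj 3).sub h2).congr_fderiv ?_
    refine ContinuousLinearMap.ext fun v => ?_
    simp [mttpD]
  · exact (hasFDerivAt_const 0 x).congr_fderiv (by
      refine ContinuousLinearMap.ext fun v => ?_
      simp [mttpD])

lemma fderiv_mttpF0_apply (a c g0 : ℝ) (x v : Fin 4 → ℝ) :
    fderiv ℝ (mttpF0 a c g0) x v =
      ![-(a * Real.sin (x 2)) * v 2 - (c * x 1 * v 0 + c * x 0 * v 1),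
        a * Real.cos (x 2) * v 2 + c * (2 * x 0) * v 0,
        v 3 - c * v 0, 0] := by
  rw [(hasFDerivAt_mttpF0 a c g0 x).fderiv]
  funext i
  fin_cases i <;> simp [mttpD] <;> ring

lemma inner_bracket (a b c g0 : ℝ) :
    lieBracket4 (mttpF0 a c g0) (mttpF1 b) = fun _ => ![0, 0, -b, 0] := by
  funext x
  unfold lieBracket4 mttpF1
  rw [fderiv_fun_const, fderiv_mttpF0_apply]
  funext i
  fin_cases i <;> simp

theorem stmt1 (a b c g0 : ℝ) (ha : 0 < a) (hb : 0 < b) (hc : 0 ≤ c) (hg0 : 0 < g0)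
    (x : Fin 4 → ℝ) :
    lieBracket4 (mttpF0 a c g0) (lieBracket4 (mttpF0 a c g0) (mttpF1 b)) x =
      ![-(a * b) * Real.sin (x 2), a * b * Real.cos (x 2), 0, 0] := by
  rw [inner_bracket]
  unfold lieBracket4
  rw [fderiv_fun_const, fderiv_mttpF0_apply]
  funext i
  fin_cases i <;> simp <;> ring
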